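/- Let (A,B) be controllable, B of full column rank m with orthogonal complement spanned by the columns of Q₂, and let X_r ∈ ℝ^{n×r} (r < n) have orthonormal columns with Q₂ᵀ A X_r = Q₂ᵀ X_r T_r for some T_r ∈ ℝ^{r×r}. Let λ ∈ ℝ and let the columns of S = [S₁; S₂] (S₁ ∈ ℝ^{n×m}, S₂ ∈ ℝ^{r×m}) form an orthonormal basis of the null space of M = [[Q₂ᵀ(A - λIₙ), -Q₂ᵀX_r],[X_rᵀ, 0]]. Then S₁ ≠ 0. -/

import Mathlib

open Matrix

/-- If the columns of `S = [S₁; S₂]` form an orthonormal basis of the null space of the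
bordered matrix `M`, then `S₁ ≠ 0`. -/
theorem stmt6 (n m p r : ℕ) (hmp : m + p = n) (hr : r < n)
    (A : Matrix (Fin n) (Fin n) ℝ) (B : Matrix (Fin n) (Fin m) ℝ)
    (hctrb : (Matrix.of fun (i : Fin n) (q : Fin n × Fin m) =>
      (A ^ (q.1 : ℕ) * B) i q.2).rank = n)
    (Q₁ : Matrix (Fin n) (Fin m) ℝ) (Q₂ : Matrix (Fin n) (Fin p) ℝ)
    (R : Matrix (Fin m) (Fin m) ℝ) (hR : IsUnit R.det)
    (hQ : (Matrix.fromCols Q₁ Q₂)ᵀ * Matrix.fromCols Q₁ Q₂ = 1)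
    (hB : B = Q₁ * R)
    (X : Matrix (Fin n) (Fin r) ℝ) (hX : Xᵀ * X = 1)
    (T : Matrix (Fin r) (Fin r) ℝ) (hT : Q₂ᵀ * A * X = Q₂ᵀ * X * T)
    (lam : ℝ)
    (M : Matrix (Fin p ⊕ Fin r) (Fin n ⊕ Fin r) ℝ)
    (hM : M = Matrix.fromBlocks (Q₂ᵀ * (A - lam • 1)) (-(Q₂ᵀ * X)) Xᵀ 0)
    (S₁ : Matrix (Fin n) (Fin m) ℝ) (S₂ : Matrix (Fin r) (Fin m) ℝ)
    (hnull : M * Matrix.fromRows S₁ S₂ = 0)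
    (horth : (Matrix.fromRows S₁ S₂)ᵀ * Matrix.fromRows S₁ S₂ = 1)
    (hspan : ∀ v : Fin n ⊕ Fin r → ℝ, M.mulVec v = 0 →
      ∃ c : Fin m → ℝ, v = (Matrix.fromRows S₁ S₂).mulVec c) :
    S₁ ≠ 0 := by
  intro hS₁
  subst hS₁
  -- orthonormality of S gives S₂ᵀ S₂ = 1
  rw [Matrix.transpose_fromRows, Matrix.fromCols_mul_fromRows] at horth
  simp only [Matrix.transpose_zero, Matrix.mul_zero, Matrix.zero_mul, zero_add] at horth
  -- extract block equations from hnull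
  rw [hM, Matrix.fromBlocks_mul_fromRows] at hnull
  have htop : Q₂ᵀ * X * S₂ = 0 := by
    have h1 : Q₂ᵀ * (A - lam • 1) * (0 : Matrix (Fin n) (Fin m) ℝ) + -(Q₂ᵀ * X) * S₂ = 0 := by
      ext i j
      have := congrFun (congrFun hnull (Sum.inl i)) j
      rw [Matrix.fromRows_apply_inl] at this
      simpa using this
    rw [Matrix.mul_zero, zero_add, Matrix.neg_mul, neg_eq_zero, Matrix.mul_assoc] at h1
    rw [Matrix.mul_assoc]
    exact h1
  -- Q Qᵀ = 1, i.e. Q₁ Q₁ᵀ + Q₂ Q₂ᵀ = 1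
  have e : Fin n ≃ Fin m ⊕ Fin p := ((finSumFinEquiv).trans (finCongr hmp)).symm
  rw [Matrix.transpose_fromCols] at hQ
  have hQQ : Q₁ * Q₁ᵀ + Q₂ * Q₂ᵀ = 1 := by
    have := (Matrix.fromCols_mul_fromRows_eq_one_comm e Q₁ Q₂ Q₁ᵀ Q₂ᵀ).mpr hQ
    rwa [Matrix.fromCols_mul_fromRows] at this
  -- key: if Q₂ᵀ V = 0 then V = Q₁ (Q₁ᵀ V)
  have key : ∀ {k : ℕ} (V : Matrix (Fin n) (Fin k) ℝ), Q₂ᵀ * V = 0 →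
      V = Q₁ * (Q₁ᵀ * V) := by
    intro k V hV
    calc V = (Q₁ * Q₁ᵀ + Q₂ * Q₂ᵀ) * V := by rw [hQQ, Matrix.one_mul]
    _ = Q₁ * (Q₁ᵀ * V) + Q₂ * (Q₂ᵀ * V) := by
        rw [Matrix.add_mul, Matrix.mul_assoc, Matrix.mul_assoc]
    _ = Q₁ * (Q₁ᵀ * V) := by rw [hV, Matrix.mul_zero, add_zero]
  -- X S₂ = Q₁ W
  obtain ⟨W, hXS⟩ : ∃ W : Matrix (Fin m) (Fin m) ℝ, X * S₂ = Q₁ * W :=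
    ⟨_, key (X * S₂) (by rw [← Matrix.mul_assoc]; exact htop)⟩
  -- A X = X T + Q₁ G
  obtain ⟨G, hAX⟩ : ∃ G : Matrix (Fin m) (Fin r) ℝ, A * X - X * T = Q₁ * G :=
    ⟨_, key _ (by rw [Matrix.mul_sub, ← Matrix.mul_assoc, ← Matrix.mul_assoc, hT, sub_self])⟩
  -- W is invertible
  have hWinj : Function.Injective W.mulVec := by
    intro c d hcd
    have h0 : W.mulVec (c - d) = 0 := by
      rw [Matrix.mulVec_sub, hcd, sub_self]
    have h1 : (X * S₂).mulVec (c - d) = 0 := by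
      rw [hXS, ← Matrix.mulVec_mulVec, h0, Matrix.mulVec_zero]
    have h2 : S₂.mulVec (c - d) = 0 := by
      have : (Xᵀ * (X * S₂)).mulVec (c - d) = 0 := by
        rw [← Matrix.mulVec_mulVec, h1, Matrix.mulVec_zero]
      rwa [← Matrix.mul_assoc, hX, Matrix.one_mul] at this
    have h3 : c - d = 0 := by
      have : (S₂ᵀ * S₂).mulVec (c - d) = 0 := by
        rw [← Matrix.mulVec_mulVec, h2, Matrix.mulVec_zero]
      rwa [horth, Matrix.one_mulVec] at this
    exact sub_eq_zero.mp h3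
  have hWunit : IsUnit W.det :=
    (Matrix.isUnit_iff_isUnit_det W).mp (Matrix.mulVec_injective_iff_isUnit.mp hWinj)
  have hWWinv : W * W⁻¹ = 1 := Matrix.mul_nonsing_inv W hWunit
  -- Q₁ = X S₂ W⁻¹
  have hQ₁ : Q₁ = X * S₂ * W⁻¹ := by
    calc Q₁ = Q₁ * (W * W⁻¹) := by rw [hWWinv, Matrix.mul_one]
    _ = (Q₁ * W) * W⁻¹ := by rw [Matrix.mul_assoc]
    _ = X * S₂ * W⁻¹ := by rw [← hXS]
  -- A X = X T'
  have hAXT : A * X = X * (T + S₂ * W⁻¹ * G) := by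
    have h4 : A * X = X * T + Q₁ * G := by rw [← hAX]; abel
    rw [h4, hQ₁, Matrix.mul_add]
    congr 1
    rw [Matrix.mul_assoc, Matrix.mul_assoc, Matrix.mul_assoc]
  -- A^k X = X T'^k
  have hpow : ∀ k : ℕ, A ^ k * X = X * (T + S₂ * W⁻¹ * G) ^ k := by
    intro k
    induction k with
    | zero => simp
    | succ k ih =>
      rw [pow_succ, pow_succ, ← Matrix.mul_assoc, Matrix.mul_assoc (A ^ k) A X, hAXT,
        ← Matrix.mul_assoc, ih, Matrix.mul_assoc]
  -- B = X D
  have hBX : B = X * (S₂ * W⁻¹ * R) := by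
    rw [hB, hQ₁]
    simp only [Matrix.mul_assoc]
  have hkey : ∀ k : ℕ, A ^ k * B =
      X * ((T + S₂ * W⁻¹ * G) ^ k * (S₂ * W⁻¹ * R)) := by
    intro k
    rw [hBX, ← Matrix.mul_assoc, hpow, Matrix.mul_assoc]
  -- factor the controllability matrix
  have hfact : (Matrix.of fun (i : Fin n) (q : Fin n × Fin m) => (A ^ (q.1 : ℕ) * B) i q.2)
      = X * (Matrix.of fun (j : Fin r) (q : Fin n × Fin m) =>
          ((T + S₂ * W⁻¹ * G) ^ (q.1 : ℕ) * (S₂ * W⁻¹ * R)) j q.2) := by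
    ext i q
    show (A ^ (q.1 : ℕ) * B) i q.2 = _
    rw [hkey]
    simp only [Matrix.mul_apply, Matrix.of_apply]
  rw [hfact] at hctrb
  have hrank : (X * (Matrix.of fun (j : Fin r) (q : Fin n × Fin m) =>
      ((T + S₂ * W⁻¹ * G) ^ (q.1 : ℕ) * (S₂ * W⁻¹ * R)) j q.2)).rank ≤ r :=
    (Matrix.rank_mul_le_left _ _).trans (Matrix.rank_le_width X)
  rw [hctrb] at hrank
  omega
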